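/- The cross-ratio equation is three-dimensionally consistent: if x, x1, x2, x3 are complex numbers and xij (for i<j) are defined by the cross-ratio equations (x-xi)(xij-xj)/((xi-xij)(xj-x)) = αi/αj, then the three values of x123 computed from the equations on the three faces (x1,x12,x31,x123), (x2,x23,x12,x123), (x3,x31,x23,x123) all coincide, and equal ((α1-α2)x1x2+(α3-α1)x3x1+(α2-α3)x2x3)/((α3-α2)x1+(α1-α3)x2+(α2-α1)x3). -/
import Mathlib


/-- Three-dimensional consistency of the cross-ratio equation:
given initial data `x, x1, x2, x3` on a cube with pairwise distinct nonzero
parameters `α1, α2, α3`, the values `x12, x23, x31` defined by the cross-ratio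
equations on the three bottom faces, and the three values `y1, y2, y3` for
`x123` determined from the three top faces, all coincide and equal the
explicit rational expression. -/
theorem crossRatio_three_dimensional_consistency
    (x x1 x2 x3 x12 x23 x31 y1 y2 y3 α1 α2 α3 : ℂ)
    (hα1 : α1 ≠ 0) (hα2 : α2 ≠ 0) (hα3 : α3 ≠ 0)
    (h12ne : α1 ≠ α2) (h23ne : α2 ≠ α3) (h31ne : α3 ≠ α1)
    -- nonvanishing of the denominators in the bottom face equations
    (hd12 : (x1 - x12) * (x2 - x) ≠ 0)
    (hd23 : (x2 - x23) * (x3 - x) ≠ 0)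
    (hd31 : (x3 - x31) * (x1 - x) ≠ 0)
    -- the cross-ratio equations on the three faces adjacent to `x`
    (h12 : (x - x1) * (x12 - x2) / ((x1 - x12) * (x2 - x)) = α1 / α2)
    (h23 : (x - x2) * (x23 - x3) / ((x2 - x23) * (x3 - x)) = α2 / α3)
    (h31 : (x - x3) * (x31 - x1) / ((x3 - x31) * (x1 - x)) = α3 / α1)
    -- nonvanishing of the denominators in the top face equations
    (he1 : (x12 - y1) * (x31 - x1) ≠ 0)
    (he2 : (x23 - y2) * (x12 - x2) ≠ 0)
    (he3 : (x31 - y3) * (x23 - x3) ≠ 0)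
    -- the cross-ratio equations on the three faces adjacent to `x123`
    (hf1 : (x1 - x12) * (y1 - x31) / ((x12 - y1) * (x31 - x1)) = α2 / α3)
    (hf2 : (x2 - x23) * (y2 - x12) / ((x23 - y2) * (x12 - x2)) = α3 / α1)
    (hf3 : (x3 - x31) * (y3 - x23) / ((x31 - y3) * (x23 - x3)) = α1 / α2)
    -- nonvanishing of the denominators arising when solving for `x12`, `x23`, `x31`
    (hc12 : α2 * (x - x1) + α1 * (x2 - x) ≠ 0)
    (hc23 : α3 * (x - x2) + α2 * (x3 - x) ≠ 0)
    (hc31 : α1 * (x - x3) + α3 * (x1 - x) ≠ 0)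
    -- nonvanishing of the denominators arising when solving for `x123`
    (hcf1 : α3 * (x1 - x12) + α2 * (x31 - x1) ≠ 0)
    (hcf2 : α1 * (x2 - x23) + α3 * (x12 - x2) ≠ 0)
    (hcf3 : α2 * (x3 - x31) + α1 * (x23 - x3) ≠ 0)
    (hD : (α3 - α2) * x1 + (α1 - α3) * x2 + (α2 - α1) * x3 ≠ 0) :
    y1 = ((α1 - α2) * x1 * x2 + (α3 - α1) * x3 * x1 + (α2 - α3) * x2 * x3) /
        ((α3 - α2) * x1 + (α1 - α3) * x2 + (α2 - α1) * x3) ∧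
    y2 = ((α1 - α2) * x1 * x2 + (α3 - α1) * x3 * x1 + (α2 - α3) * x2 * x3) /
        ((α3 - α2) * x1 + (α1 - α3) * x2 + (α2 - α1) * x3) ∧
    y3 = ((α1 - α2) * x1 * x2 + (α3 - α1) * x3 * x1 + (α2 - α3) * x2 * x3) /
        ((α3 - α2) * x1 + (α1 - α3) * x2 + (α2 - α1) * x3) := by
  have hx12 : x12 = (α2 * (x - x1) * x2 + α1 * x1 * (x2 - x)) / (α2 * (x - x1) + α1 * (x2 - x)) := by
    rw [eq_div_iff hc12]
    have h := (div_eq_div_iff hd12 hα2).mp h12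
    ring_nf at h ⊢
    linear_combination h
  have hx23 : x23 = (α3 * (x - x2) * x3 + α2 * x2 * (x3 - x)) / (α3 * (x - x2) + α2 * (x3 - x)) := by
    rw [eq_div_iff hc23]
    have h := (div_eq_div_iff hd23 hα3).mp h23
    ring_nf at h ⊢
    linear_combination h
  have hx31 : x31 = (α1 * (x - x3) * x1 + α3 * x3 * (x1 - x)) / (α1 * (x - x3) + α3 * (x1 - x)) := by
    rw [eq_div_iff hc31]
    have h := (div_eq_div_iff hd31 hα1).mp h31
    ring_nf at h ⊢
    linear_combination h
  have hy1 : y1 = (α3 * (x1 - x12) * x31 + α2 * x12 * (x31 - x1)) / (α3 * (x1 - x12) + α2 * (x31 - x1)) := by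
    rw [eq_div_iff hcf1]
    have h := (div_eq_div_iff he1 hα3).mp hf1
    ring_nf at h ⊢
    linear_combination h
  have hy2 : y2 = (α1 * (x2 - x23) * x12 + α3 * x23 * (x12 - x2)) / (α1 * (x2 - x23) + α3 * (x12 - x2)) := by
    rw [eq_div_iff hcf2]
    have h := (div_eq_div_iff he2 hα1).mp hf2
    ring_nf at h ⊢
    linear_combination h
  have hy3 : y3 = (α2 * (x3 - x31) * x23 + α1 * x31 * (x23 - x3)) / (α2 * (x3 - x31) + α1 * (x23 - x3)) := by
    rw [eq_div_iff hcf3]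
    have h := (div_eq_div_iff he3 hα2).mp hf3
    ring_nf at h ⊢
    linear_combination h
  subst hx12 hx23 hx31
  refine ⟨?_, ?_, ?_⟩
  · rw [hy1, div_eq_div_iff hcf1 hD]
    field_simp
    ring
  · rw [hy2, div_eq_div_iff hcf2 hD]
    field_simp
    ring
  · rw [hy3, div_eq_div_iff hcf3 hD]
    field_simp
    ring
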